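/- Let ψ_1, ψ_2, ψ_3 be unit vectors in ℂ³ with |⟨ψ_i, ψ_j⟩|² = 1/4 for all i ≠ j, let ρ_i = |ψ_i⟩⟨ψ_i| and M = ρ_1 + ρ_2 + ρ_3. Then |tr(ρ_1 ρ_2 ρ_3)| = 1/8, and writing tr(ρ_1 ρ_2 ρ_3) = (1/8) e^{iφ} with φ ∈ ℝ, one has tr(M) = 3, tr(M²) = 9/2, and tr(M³) = 15/2 + (3/4) cos φ. In particular the eigenvalues of M are determined by the geometric phase φ, which is the only independent unitary invariant of the triple. -/

import Mathlib

noncomputable section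

open Complex Matrix

/-- The standard Hermitian inner product on `ℂ³`, conjugate-linear in the first argument. -/
def inn (x y : Fin 3 → ℂ) : ℂ := ∑ i, (starRingEnd ℂ) (x i) * y i

/-- The rank-one projection `|φ⟩⟨φ|` onto the line of a unit vector `φ`. -/
def proj (φ : Fin 3 → ℂ) : Matrix (Fin 3) (Fin 3) ℂ :=
  Matrix.vecMulVec φ fun i => (starRingEnd ℂ) (φ i)

lemma inn_conj (x y : Fin 3 → ℂ) : inn y x = (starRingEnd ℂ) (inn x y) := by
  simp [inn, map_sum, _root_.map_mul, mul_comm]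

lemma tr1 (a : Fin 3 → ℂ) : Matrix.trace (proj a) = inn a a := by
  simp [proj, inn, Matrix.trace, Matrix.vecMulVec_apply, Fin.sum_univ_succ, Matrix.diag]
  ring

lemma tr2 (a b : Fin 3 → ℂ) :
    Matrix.trace (proj a * proj b) = inn a b * inn b a := by
  simp [proj, inn, Matrix.trace, Matrix.mul_apply, Matrix.vecMulVec_apply,
    Fin.sum_univ_succ, Matrix.diag]
  ring

lemma tr3 (a b c : Fin 3 → ℂ) :
    Matrix.trace (proj a * proj b * proj c) = inn a b * inn b c * inn c a := by
  simp [proj, inn, Matrix.trace, Matrix.mul_apply, Matrix.vecMulVec_apply,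
    Fin.sum_univ_succ, Matrix.diag]
  ring

/-- For three unit vectors in `ℂ³` with pairwise squared overlaps `1/4`
(e.g. any three vectors of a SIC POVM in dimension 3), with `ρ_i = |ψ_i⟩⟨ψ_i|` and
`M = ρ_1 + ρ_2 + ρ_3`: `|tr(ρ_1 ρ_2 ρ_3)| = 1/8`, and if `tr(ρ_1 ρ_2 ρ_3) = (1/8) e^{iφ}`
then `tr M = 3`, `tr M² = 9/2` and `tr M³ = 15/2 + (3/4) cos φ`. -/
theorem dim3_triple_invariants (ψ : Fin 3 → (Fin 3 → ℂ))
    (hunit : ∀ i, inn (ψ i) (ψ i) = 1)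
    (hover : ∀ i j, i ≠ j → ‖inn (ψ i) (ψ j)‖ ^ 2 = 1 / 4) :
    ‖Matrix.trace (proj (ψ 0) * proj (ψ 1) * proj (ψ 2))‖ = 1 / 8 ∧
    ∀ φ : ℝ, Matrix.trace (proj (ψ 0) * proj (ψ 1) * proj (ψ 2)) =
        (1 / 8) * Complex.exp (Complex.I * (φ : ℂ)) →
      Matrix.trace (proj (ψ 0) + proj (ψ 1) + proj (ψ 2)) = 3 ∧
      Matrix.trace ((proj (ψ 0) + proj (ψ 1) + proj (ψ 2)) ^ 2) = 9 / 2 ∧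
      Matrix.trace ((proj (ψ 0) + proj (ψ 1) + proj (ψ 2)) ^ 3) =
        15 / 2 + (3 / 4) * ((Real.cos φ : ℝ) : ℂ) := by
  have hab : ∀ i j, i ≠ j → ‖inn (ψ i) (ψ j)‖ = 1 / 2 := by
    intro i j hij
    have h := hover i j hij
    nlinarith [norm_nonneg (inn (ψ i) (ψ j))]
  -- conjugate relations
  have e10 : inn (ψ 1) (ψ 0) = (starRingEnd ℂ) (inn (ψ 0) (ψ 1)) := inn_conj _ _
  have e21 : inn (ψ 2) (ψ 1) = (starRingEnd ℂ) (inn (ψ 1) (ψ 2)) := inn_conj _ _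
  have e02 : inn (ψ 0) (ψ 2) = (starRingEnd ℂ) (inn (ψ 2) (ψ 0)) := inn_conj _ _
  have key : ∀ i j, i ≠ j → inn (ψ i) (ψ j) * (starRingEnd ℂ) (inn (ψ i) (ψ j)) = 1 / 4 := by
    intro i j hij
    rw [Complex.mul_conj, ← Complex.sq_norm, hover i j hij]
    norm_num
  have c01 := key 0 1 (by decide)
  have c12 := key 1 2 (by decide)
  have c20 := key 2 0 (by decide)
  refine ⟨?_, ?_⟩
  · rw [tr3, norm_mul, norm_mul, hab 0 1 (by decide), hab 1 2 (by decide),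
      hab 2 0 (by decide)]
    norm_num
  · intro φ hz
    rw [tr3] at hz
    have hconj : (starRingEnd ℂ) (inn (ψ 0) (ψ 1)) * (starRingEnd ℂ) (inn (ψ 1) (ψ 2)) *
        (starRingEnd ℂ) (inn (ψ 2) (ψ 0)) = (1 / 8) * Complex.exp (-(Complex.I * (φ : ℂ))) := by
      have h := congrArg (starRingEnd ℂ) hz
      simp only [_root_.map_mul, ← Complex.exp_conj, Complex.conj_I, Complex.conj_ofReal,
        neg_mul, map_div₀, _root_.map_one, map_ofNat] at h
      exact h
    have hcos : Complex.exp (Complex.I * (φ : ℂ)) + Complex.exp (-(Complex.I * (φ : ℂ))) =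
        2 * ((Real.cos φ : ℝ) : ℂ) := by
      rw [mul_comm Complex.I ((φ : ℂ)), ← neg_mul, Complex.exp_mul_I, Complex.exp_mul_I,
        Complex.cos_neg, Complex.sin_neg, Complex.ofReal_cos]
      ring
    refine ⟨?_, ?_, ?_⟩
    · rw [Matrix.trace_add, Matrix.trace_add, tr1, tr1, tr1, hunit, hunit, hunit]
      norm_num
    · simp only [sq, add_mul, mul_add, Matrix.trace_add, tr2, tr3, e10, e21, e02, hunit]
      linear_combination 2 * c01 + 2 * c12 + 2 * c20
    · simp only [pow_succ, pow_zero, one_mul, add_mul, mul_add, Matrix.trace_add, tr3,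
        e10, e21, e02, hunit]
      linear_combination 6 * c01 + 6 * c12 + 6 * c20 + 3 * hz + 3 * hconj + (3 / 8) * hcos
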